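/- Let A = {0,1}^ℕ (an infinite compact outcome space) and let μ be the probability measure on A^ℤ under which the coordinates ζ_n[0], n ∈ ℤ, are i.i.d. fair coin flips and ζ_n[k] = ζ_{n−k}[0] for all k ≥ 1. Then μ is stationary, its future tail σ-algebra (completed) equals the full Borel σ-algebra of A^ℤ, and its past tail σ-algebra (completed) is trivial. Consequently the completed past and future tails of a stationary process need not coincide when the outcome set is infinite. -/

import Mathlib

open MeasureTheory
open scoped ENNReal

/-- The left shift on `A^ℤ`. -/
def shiftZ {A : Type*} (ω : ℤ → A) : ℤ → A := fun n => ω (n + 1)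

/-- The σ-algebra on `A^ℤ` generated by the coordinates with index in `s`. -/
def coordSigma (A : Type*) [MeasurableSpace A] (s : Set ℤ) : MeasurableSpace (ℤ → A) :=
  ⨆ k ∈ s, MeasurableSpace.comap (fun ω : ℤ → A => ω k) inferInstance

/-- The past tail σ-algebra `∩_m σ(…, ζ_{-m-1}, ζ_{-m})`. -/
def pastTail (A : Type*) [MeasurableSpace A] : MeasurableSpace (ℤ → A) :=
  ⨅ m : ℕ, coordSigma A (Set.Iic (-(m : ℤ)))

/-- The future tail σ-algebra `∩_m σ(ζ_m, ζ_{m+1}, …)`. -/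
def futureTail (A : Type*) [MeasurableSpace A] : MeasurableSpace (ℤ → A) :=
  ⨅ m : ℕ, coordSigma A (Set.Ici (m : ℤ))

set_option linter.unusedSectionVars false

namespace TailsAux

noncomputable section

abbrev XX := ℤ → Bool
abbrev OO := ℤ → (ℕ → Bool)

def pim (ω : OO) : XX := fun n => ω n 0
def phi (x : XX) : OO := fun n k => x (n - k)
def shiftX (x : XX) : XX := fun n => x (n + 1)

lemma measurable_pim : Measurable pim :=
  measurable_pi_lambda _ fun n => (measurable_pi_apply 0).comp (measurable_pi_apply n)

lemma measurable_phi : Measurable phi :=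
  measurable_pi_lambda _ fun n => measurable_pi_lambda _ fun k => measurable_pi_apply (n - k)

lemma measurable_shiftX : Measurable shiftX :=
  measurable_pi_lambda _ fun n => measurable_pi_apply (n + 1)

def cyl (F : Finset ℤ) (b : ℤ → Bool) : Set XX := {x | ∀ n ∈ F, x n = b n}

lemma measurableSet_cyl (F : Finset ℤ) (b : ℤ → Bool) : MeasurableSet (cyl F b) := by
  have : cyl F b = ⋂ n ∈ F, (fun x : XX => x n) ⁻¹' {b n} := by
    ext x; simp [cyl]
  rw [this]
  exact Set.Finite.measurableSet_biInter (F.finite_toSet) fun n _ =>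
    (measurable_pi_apply n) (measurableSet_singleton (b n))

def Cyl : Set (Set XX) := {s | ∃ F b, s = cyl F b}

lemma isPiSystem_Cyl : IsPiSystem Cyl := by
  rintro s ⟨F, b, rfl⟩ t ⟨G, c, rfl⟩ hne
  obtain ⟨x0, hx0F, hx0G⟩ := hne
  classical
  refine ⟨F ∪ G, fun n => if n ∈ F then b n else c n, ?_⟩
  ext x
  simp only [cyl, Set.mem_inter_iff, Set.mem_setOf_eq, Finset.mem_union]
  constructor
  · rintro ⟨h1, h2⟩ n hn
    rcases hn with hn | hn
    · simp [hn, h1 n hn]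
    · by_cases hF : n ∈ F
      · simp [hF, h1 n hF]
      · simp [hF, h2 n hn]
  · intro h
    constructor
    · intro n hn
      have := h n (Or.inl hn); simpa [hn] using this
    · intro n hn
      have := h n (Or.inr hn)
      by_cases hF : n ∈ F
      · have hcon : b n = c n := (hx0F n hF).symm.trans (hx0G n hn)
        rw [← hcon]; simpa [hF] using this
      · simpa [hF] using this

lemma coord_meas_gen (n : ℤ) :
    @Measurable XX Bool (MeasurableSpace.generateFrom Cyl) _ (fun x => x n) := by
  refine @measurable_to_countable' Bool XX _ _ (MeasurableSpace.generateFrom Cyl) _ fun c => ?_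
  have : (fun x : XX => x n) ⁻¹' {c} = cyl {n} (fun _ => c) := by
    ext x; simp [cyl]
  rw [this]
  exact MeasurableSpace.measurableSet_generateFrom ⟨{n}, fun _ => c, rfl⟩

lemma generateFrom_Cyl : (inferInstance : MeasurableSpace XX) = MeasurableSpace.generateFrom Cyl := by
  refine le_antisymm (iSup_le fun n => Measurable.comap_le (coord_meas_gen n))
    (MeasurableSpace.generateFrom_le ?_)
  rintro s ⟨F, b, rfl⟩; exact measurableSet_cyl F b


section Meas

variable (μ : Measure OO) [IsProbabilityMeasure μ]
variable (hiid : ∀ (F : Finset ℤ) (b : ℤ → Bool),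
      μ {ω | ∀ n ∈ F, ω n 0 = b n} = (1 / 2 : ℝ≥0∞) ^ F.card)
variable (hcopy : μ {ω | ∀ (n : ℤ) (k : ℕ), 1 ≤ k → ω n k = ω (n - (k : ℤ)) 0} = 1)

def nu : Measure XX := μ.map pim

instance : IsProbabilityMeasure (nu μ) :=
  Measure.isProbabilityMeasure_map measurable_pim.aemeasurable

include hiid in
lemma nu_cyl (F : Finset ℤ) (b : ℤ → Bool) : nu μ (cyl F b) = (1 / 2 : ℝ≥0∞) ^ F.card := by
  rw [nu, Measure.map_apply measurable_pim (measurableSet_cyl F b)]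
  have : pim ⁻¹' (cyl F b) = {ω : OO | ∀ n ∈ F, ω n 0 = b n} := rfl
  rw [this]; exact hiid F b

include hiid in
lemma nu_shift : (nu μ).map shiftX = nu μ := by
  have : IsProbabilityMeasure ((nu μ).map shiftX) :=
    Measure.isProbabilityMeasure_map measurable_shiftX.aemeasurable
  refine ext_of_generate_finite Cyl generateFrom_Cyl isPiSystem_Cyl ?_ (by simp)
  rintro s ⟨F, b, rfl⟩
  rw [Measure.map_apply measurable_shiftX (measurableSet_cyl F b)]
  classical
  have hpre : shiftX ⁻¹' (cyl F b) = cyl (F.image (· + 1)) (fun m => b (m - 1)) := by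
    ext x
    simp only [cyl, Set.mem_preimage, Set.mem_setOf_eq, shiftX, Finset.mem_image]
    constructor
    · rintro h m ⟨n, hn, rfl⟩
      simpa using h n hn
    · intro h n hn
      simpa using h (n + 1) ⟨n, hn, rfl⟩
  rw [hpre, nu_cyl μ hiid, nu_cyl μ hiid,
    Finset.card_image_of_injective _ (add_left_injective 1)]

lemma copy_set_measurable :
    MeasurableSet {ω : OO | ∀ (n : ℤ) (k : ℕ), 1 ≤ k → ω n k = ω (n - (k : ℤ)) 0} := by
  have : {ω : OO | ∀ (n : ℤ) (k : ℕ), 1 ≤ k → ω n k = ω (n - (k : ℤ)) 0}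
      = ⋂ (n : ℤ), ⋂ (k : ℕ), ⋂ (_ : 1 ≤ k), {ω : OO | ω n k = ω (n - (k : ℤ)) 0} := by
    ext ω; simp
  rw [this]
  refine MeasurableSet.iInter fun n => MeasurableSet.iInter fun k => MeasurableSet.iInter fun _ => ?_
  exact measurableSet_eq_fun
    ((measurable_pi_apply k).comp (measurable_pi_apply n))
    ((measurable_pi_apply 0).comp (measurable_pi_apply (n - (k:ℤ))))

include hcopy in
lemma ae_copy : ∀ᵐ ω ∂μ, ∀ (n : ℤ) (k : ℕ), 1 ≤ k → ω n k = ω (n - (k : ℤ)) 0 := by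
  rw [ae_iff]
  have := prob_compl_eq_zero_iff (μ := μ) (copy_set_measurable) |>.2 hcopy
  simpa [Set.compl_setOf] using this

include hcopy in
lemma mu_eq : μ = (nu μ).map phi := by
  have hae : phi ∘ pim =ᵐ[μ] id := by
    filter_upwards [ae_copy μ hcopy] with ω hω
    funext n k
    show pim ω (n - k) = ω n k
    rcases Nat.eq_zero_or_pos k with hk | hk
    · subst hk; simp [pim]
    · exact (hω n k hk).symm
  calc μ = μ.map id := (Measure.map_id).symm
  _ = μ.map (phi ∘ pim) := (Measure.map_congr hae).symm
  _ = (μ.map pim).map phi := (Measure.map_map measurable_phi measurable_pim).symm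

lemma shiftZ_phi : shiftZ (A := ℕ → Bool) ∘ phi = phi ∘ shiftX := by
  funext x n k
  show x (n + 1 - k) = x (n - k + 1)
  ring_nf

include hiid hcopy in
lemma part1 : MeasurePreserving (shiftZ (A := ℕ → Bool)) μ μ := by
  refine ⟨measurable_pi_lambda _ fun n => measurable_pi_apply (n + 1), ?_⟩
  calc μ.map (shiftZ (A := ℕ → Bool))
      = ((nu μ).map phi).map (shiftZ (A := ℕ → Bool)) := by rw [← mu_eq μ hcopy]
    _ = (nu μ).map (shiftZ (A := ℕ → Bool) ∘ phi) := Measure.map_map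
        (measurable_pi_lambda _ fun n => measurable_pi_apply (n + 1)) measurable_phi
    _ = (nu μ).map (phi ∘ shiftX) := by rw [shiftZ_phi]
    _ = ((nu μ).map shiftX).map phi := (Measure.map_map measurable_phi measurable_shiftX).symm
    _ = (nu μ).map phi := by rw [nu_shift μ hiid]
    _ = μ := (mu_eq μ hcopy).symm

-- ## Part 2 machinery

def E (n : ℤ) : Set OO := {ω | ∀ᶠ j : ℕ in Filter.atTop, ω (n + j) j = true}

lemma coord_mem_coordSigma {s : Set ℤ} {i : ℤ} (hi : i ∈ s) {t : Set (ℕ → Bool)}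
    (ht : MeasurableSet t) :
    MeasurableSet[coordSigma (ℕ → Bool) s] ((fun ω : OO => ω i) ⁻¹' t) := by
  have h1 : MeasurableSpace.comap (fun ω : OO => ω i) inferInstance
      ≤ coordSigma (ℕ → Bool) s :=
    le_iSup₂ (f := fun k (_ : k ∈ s) =>
      MeasurableSpace.comap (fun ω : OO => ω k) inferInstance) i hi
  exact h1 _ ⟨t, ht, rfl⟩

lemma E_meas (n : ℤ) : MeasurableSet[futureTail (ℕ → Bool)] (E n) := by
  rw [futureTail, MeasurableSpace.measurableSet_iInf]
  intro m
  set N₀ : ℕ := ((m : ℤ) - n).toNat with hN₀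
  have hrep : E n = ⋃ N : ℕ, ⋂ j : ℕ, ⋂ (_ : N + N₀ ≤ j),
      (fun ω : OO => ω (n + (j : ℤ))) ⁻¹' ((fun a : ℕ → Bool => a j) ⁻¹' {true}) := by
    ext ω
    simp only [E, Set.mem_setOf_eq, Filter.eventually_atTop, Set.mem_iUnion, Set.mem_iInter,
      Set.mem_preimage]
    constructor
    · rintro ⟨a, ha⟩
      exact ⟨a, fun j hj => ha j (le_trans (Nat.le_add_right a N₀) hj)⟩
    · rintro ⟨N, hN⟩; exact ⟨N + N₀, fun j hj => hN j hj⟩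
  rw [hrep]
  refine MeasurableSet.iUnion fun N => MeasurableSet.iInter fun j =>
    MeasurableSet.iInter fun hj => ?_
  have h1 : (m : ℤ) - n ≤ (N₀ : ℤ) := Int.self_le_toNat _
  have h2 : (N₀ : ℤ) ≤ (j : ℤ) := by
    exact_mod_cast le_trans (Nat.le_add_left N₀ N) hj
  have hin : n + (j : ℤ) ∈ Set.Ici ((m : ℕ) : ℤ) := by
    simp only [Set.mem_Ici]; omega
  exact coord_mem_coordSigma hin ((measurable_pi_apply j) (measurableSet_singleton true))

open Classical in
def recon (ω : OO) : XX := fun n => if ω ∈ E n then true else false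

open Classical in
lemma recon_meas : @Measurable OO XX (futureTail (ℕ → Bool)) _ recon := by
  refine @measurable_pi_lambda OO ℤ (fun _ => Bool) (futureTail (ℕ → Bool)) _ recon
    fun n => ?_
  refine @measurable_to_countable' Bool OO _ _ (futureTail (ℕ → Bool))
    (fun ω => if ω ∈ E n then true else false) fun c => ?_
  cases c
  · have h : (fun ω : OO => if ω ∈ E n then true else false) ⁻¹' {false} = (E n)ᶜ := by
      ext ω; by_cases h : ω ∈ E n <;> simp [h]
    rw [h]; exact (E_meas n).compl
  · have h : (fun ω : OO => if ω ∈ E n then true else false) ⁻¹' {true} = E n := by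
      ext ω; by_cases h : ω ∈ E n <;> simp [h]
    rw [h]; exact E_meas n

lemma recon_spec {ω : OO} (hω : ∀ (n : ℤ) (k : ℕ), 1 ≤ k → ω n k = ω (n - (k : ℤ)) 0) :
    phi (recon ω) = ω := by
  funext n k
  show recon ω (n - k) = ω n k
  have hval : ∀ j : ℕ, 1 ≤ j → ω (n - (k : ℤ) + (j : ℤ)) j = ω (n - (k : ℤ)) 0 := by
    intro j hj
    have h := hω (n - (k : ℤ) + (j : ℤ)) j hj
    simpa using h
  have hE : ω ∈ E (n - (k : ℤ)) ↔ ω (n - (k : ℤ)) 0 = true := by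
    constructor
    · intro h
      obtain ⟨a, ha⟩ := Filter.eventually_atTop.1 h
      have h2 := ha (max a 1) (le_max_left _ _)
      rwa [hval (max a 1) (le_max_right _ _)] at h2
    · intro h
      exact Filter.eventually_atTop.2 ⟨1, fun j hj => by rw [hval j hj]; exact h⟩
  have hk0 : ω (n - (k : ℤ)) 0 = ω n k := by
    rcases Nat.eq_zero_or_pos k with h | h
    · subst h; simp
    · exact (hω n k h).symm
  by_cases hb : ω (n - (k : ℤ)) 0 = true
  · simp only [recon, if_pos (hE.2 hb)]
    rw [← hk0, hb]
  · have hf : ω (n - (k : ℤ)) 0 = false := by simpa using hb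
    simp only [recon, if_neg (fun h => hb (hE.1 h))]
    rw [← hk0, hf]

include hcopy in
lemma part2 (S : Set OO) (hS : MeasurableSet S) :
    ∃ B, MeasurableSet[futureTail (ℕ → Bool)] B ∧ μ (symmDiff S B) = 0 := by
  refine ⟨(fun ω => phi (recon ω)) ⁻¹' S, (measurable_phi.comp recon_meas) hS, ?_⟩
  have hsub : symmDiff S ((fun ω => phi (recon ω)) ⁻¹' S) ⊆
      {ω : OO | ∀ (n : ℤ) (k : ℕ), 1 ≤ k → ω n k = ω (n - (k : ℤ)) 0}ᶜ := by
    intro ω hωd hωC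
    have heq : phi (recon ω) = ω := recon_spec hωC
    rw [Set.mem_symmDiff] at hωd
    rcases hωd with ⟨h1, h2⟩ | ⟨h1, h2⟩
    · exact h2 (by rw [Set.mem_preimage, heq]; exact h1)
    · exact h2 (by rw [Set.mem_preimage, heq] at h1; exact h1)
  exact measure_mono_null hsub ((prob_compl_eq_zero_iff copy_set_measurable).2 hcopy)

-- ## Part 3 machinery

def sB : ℤ → MeasurableSpace XX := fun j => MeasurableSpace.comap (fun x => x j) inferInstance

lemma sB_le : ∀ j, sB j ≤ (inferInstance : MeasurableSpace XX) := fun j =>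
  (measurable_pi_apply j).comap_le

lemma bool_top : (inferInstance : MeasurableSpace Bool)
    = MeasurableSpace.generateFrom {{true}} := by
  refine le_antisymm (fun s _ => ?_) (MeasurableSpace.generateFrom_le fun s _ => trivial)
  have h1 : MeasurableSet[MeasurableSpace.generateFrom {{true}}] {true} :=
    MeasurableSpace.measurableSet_generateFrom rfl
  have h2 : MeasurableSet[MeasurableSpace.generateFrom {{true}}] {false} := by
    have : ({false} : Set Bool) = {true}ᶜ := by ext b; cases b <;> simp
    rw [this]; exact h1.compl
  have hs : s = ⋃ b ∈ s, {b} := (Set.biUnion_of_singleton s).symm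
  rw [hs]
  exact MeasurableSet.biUnion (Set.to_countable s)
    (fun b _ => by cases b; exacts [h2, h1])

lemma sB_gen (j : ℤ) : sB j = MeasurableSpace.generateFrom {{x : XX | x j = true}} := by
  rw [sB, bool_top, MeasurableSpace.comap_generateFrom]
  congr 1
  rw [Set.image_singleton]
  refine congrArg _ ?_
  ext x; simp [Set.mem_preimage]

include hiid in
lemma nu_indep : ProbabilityTheory.iIndep sB (nu μ) := by
  refine ProbabilityTheory.iIndepSets.iIndep sB_le (fun j => {{x : XX | x j = true}})
    (fun j => ?_) sB_gen ?_
  · rintro s hs t ht -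
    rw [Set.mem_singleton_iff] at hs ht; subst hs; subst ht
    simp
  · rw [ProbabilityTheory.iIndepSets_iff]
    intro F f hf
    have hf' : ∀ i ∈ F, f i = {x : XX | x i = true} := fun i hi =>
      Set.mem_singleton_iff.1 (hf i hi)
    have hInt : (⋂ i ∈ F, f i) = cyl F (fun _ => true) := by
      ext x
      simp only [Set.mem_iInter, cyl, Set.mem_setOf_eq]
      refine forall_congr' fun i => forall_congr' fun hi => ?_
      rw [hf' i hi]; rfl
    rw [hInt, nu_cyl μ hiid]
    have hone : ∀ i ∈ F, nu μ (f i) = 1 / 2 := by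
      intro i hi
      rw [hf' i hi]
      have h : {x : XX | x i = true} = cyl {i} (fun _ => true) := by ext x; simp [cyl]
      rw [h, nu_cyl μ hiid]; simp
    rw [Finset.prod_congr rfl hone, Finset.prod_const]

lemma le_limsup : (⨅ b : ℤ, ⨆ j ∈ Set.Iic b, sB j) ≤ Filter.limsup sB Filter.atBot := by
  rw [Filter.limsup_eq_iInf_iSup]
  refine le_iInf₂ fun t ht => ?_
  obtain ⟨b, hb⟩ := Filter.mem_atBot_sets.1 ht
  refine iInf_le_of_le b ?_
  exact iSup₂_le fun j hj => le_iSup₂ (f := fun a (_ : a ∈ t) => sB a) j (hb j hj)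

lemma phi_meas_past (b : ℤ) (m : ℕ) (hmb : -(m : ℤ) ≤ b) :
    @Measurable XX OO (⨆ j ∈ Set.Iic b, sB j)
      (coordSigma (ℕ → Bool) (Set.Iic (-(m : ℤ)))) phi := by
  rw [measurable_iff_comap_le, coordSigma]
  simp only [MeasurableSpace.comap_iSup, MeasurableSpace.comap_comp]
  refine iSup₂_le fun k hk => ?_
  rw [← measurable_iff_comap_le]
  refine @measurable_pi_lambda XX ℕ (fun _ => Bool) (⨆ j ∈ Set.Iic b, sB j) _ _ fun j => ?_
  rw [measurable_iff_comap_le]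
  have hkj : k - (j : ℤ) ∈ Set.Iic b := by
    simp only [Set.mem_Iic] at hk ⊢; omega
  exact le_iSup₂ (f := fun a (_ : a ∈ Set.Iic b) => sB a) (k - (j : ℤ)) hkj

include hiid hcopy in
lemma part3 (S : Set OO) (hS : MeasurableSet[pastTail (ℕ → Bool)] S) :
    μ S = 0 ∨ μ S = 1 := by
  rw [pastTail] at hS
  have hS' := MeasurableSpace.measurableSet_iInf.1 hS
  have hSfull : MeasurableSet S := by
    have hle : coordSigma (ℕ → Bool) (Set.Iic (-((0:ℕ) : ℤ)))
        ≤ (inferInstance : MeasurableSpace OO) :=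
      iSup₂_le fun k _ => (measurable_pi_apply k).comap_le
    exact hle _ (hS' 0)
  have ht : MeasurableSet[Filter.limsup sB Filter.atBot] (phi ⁻¹' S) := by
    refine le_limsup _ ?_
    rw [MeasurableSpace.measurableSet_iInf]
    intro b
    have hmb : -(((-b).toNat : ℕ) : ℤ) ≤ b := by
      have := Int.self_le_toNat (-b); omega
    exact (phi_meas_past b (-b).toNat hmb) (hS' (-b).toNat)
  have h01 := ProbabilityTheory.measure_zero_or_one_of_measurableSet_limsup_atBot
    sB_le (nu_indep μ hiid) ht
  rw [mu_eq μ hcopy, Measure.map_apply measurable_phi hSfull]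
  exact h01

end Meas
end
end TailsAux

/-- With the infinite outcome space `A = {0,1}^ℕ`, let `μ` make the components
`ζ_n[0]` i.i.d. fair coins and set `ζ_n[k] = ζ_{n-k}[0]`.  Then `μ` is stationary, its
completed future tail is the full (product) σ-algebra, its completed past tail is
trivial; consequently the completed past and future tails differ. -/
theorem infinite_outcomes_tails_differ
    (μ : Measure (ℤ → (ℕ → Bool))) [IsProbabilityMeasure μ]
    (hiid : ∀ (F : Finset ℤ) (b : ℤ → Bool),
      μ {ω | ∀ n ∈ F, ω n 0 = b n} = (1 / 2 : ℝ≥0∞) ^ F.card)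
    (hcopy : μ {ω | ∀ (n : ℤ) (k : ℕ), 1 ≤ k → ω n k = ω (n - (k : ℤ)) 0} = 1) :
    MeasurePreserving (shiftZ (A := ℕ → Bool)) μ μ ∧
    (∀ S : Set (ℤ → (ℕ → Bool)), MeasurableSet S →
      ∃ B, MeasurableSet[futureTail (ℕ → Bool)] B ∧ μ (symmDiff S B) = 0) ∧
    (∀ S : Set (ℤ → (ℕ → Bool)), MeasurableSet[pastTail (ℕ → Bool)] S →
      μ S = 0 ∨ μ S = 1) ∧
    {S : Set (ℤ → (ℕ → Bool)) |
        ∃ B, MeasurableSet[pastTail (ℕ → Bool)] B ∧ μ (symmDiff S B) = 0} ≠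
      {S : Set (ℤ → (ℕ → Bool)) |
        ∃ B, MeasurableSet[futureTail (ℕ → Bool)] B ∧ μ (symmDiff S B) = 0} := by
  refine ⟨TailsAux.part1 μ hiid hcopy, TailsAux.part2 μ hcopy, TailsAux.part3 μ hiid hcopy, ?_⟩
  intro h
  set S₀ : Set (ℤ → (ℕ → Bool)) := {ω | ω 0 0 = true} with hS₀
  have hmeas : MeasurableSet S₀ := by
    have h0 : S₀ = (fun ω : ℤ → ℕ → Bool => ω 0) ⁻¹'
        ((fun a : ℕ → Bool => a 0) ⁻¹' {true}) := rfl
    rw [h0]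
    exact (measurable_pi_apply 0) ((measurable_pi_apply 0) (measurableSet_singleton true))
  have hval : μ S₀ = 1 / 2 := by
    have h1 := hiid {0} (fun _ => true)
    simpa [hS₀] using h1
  have hmemR : S₀ ∈ {S : Set (ℤ → (ℕ → Bool)) |
      ∃ B, MeasurableSet[futureTail (ℕ → Bool)] B ∧ μ (symmDiff S B) = 0} :=
    TailsAux.part2 μ hcopy S₀ hmeas
  rw [← h] at hmemR
  obtain ⟨B, hB, hd⟩ := hmemR
  have hμB : μ S₀ = μ B := measure_congr (measure_symmDiff_eq_zero_iff.1 hd)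
  have h01 := TailsAux.part3 μ hiid hcopy B hB
  rw [← hμB, hval] at h01
  rcases h01 with h' | h' <;> simp at h'
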